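/- Let A be a positive integer with A ≥ 16 and let V_A(s) = ζ(s)·∑_{n=1}^A μ(n)/n^s − 1. Then for every real t, |V_A(2+it)|² < 1/2. -/

import Mathlib

open Finset LSeries ArithmeticFunction Complex
open scoped LSeries.notation
open scoped ArithmeticFunction.Moebius

lemma tail_sq_bound (A : ℕ) (hA : 1 ≤ A) :
    ∑' n : ℕ, Set.indicator {n : ℕ | A < n} (fun n : ℕ => ((n : ℝ) ^ 2)⁻¹) n ≤ (A : ℝ)⁻¹ := by
  have hsq : Summable (fun n : ℕ => ((n : ℝ) ^ 2)⁻¹) :=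
    Real.summable_nat_pow_inv.mpr one_lt_two
  have hsum : Summable (Set.indicator {n : ℕ | A < n} (fun n : ℕ => ((n : ℝ) ^ 2)⁻¹)) :=
    hsq.indicator _
  refine Summable.tsum_le_of_sum_le hsum fun u => ?_
  have h1 : ∑ n ∈ u, Set.indicator {n : ℕ | A < n} (fun n : ℕ => ((n : ℝ) ^ 2)⁻¹) n
      = ∑ n ∈ u.filter (A < ·), ((n : ℝ) ^ 2)⁻¹ := by
    rw [Finset.sum_filter]
    refine Finset.sum_congr rfl fun n _ => ?_
    by_cases h : A < n <;> simp [Set.indicator, h]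
  rw [h1]
  have h2 : u.filter (A < ·) ⊆ Finset.Ioc A (max A (u.sup _root_.id)) := by
    intro n hn
    simp only [Finset.mem_filter] at hn
    simp only [Finset.mem_Ioc]
    exact ⟨hn.2, le_max_of_le_right (Finset.le_sup (f := _root_.id) hn.1)⟩
  calc ∑ n ∈ u.filter (A < ·), ((n : ℝ) ^ 2)⁻¹
      ≤ ∑ n ∈ Finset.Ioc A (max A (u.sup _root_.id)), ((n : ℝ) ^ 2)⁻¹ :=
        Finset.sum_le_sum_of_subset_of_nonneg h2 (fun i _ _ => by positivity)
    _ ≤ (A : ℝ)⁻¹ - ((max A (u.sup _root_.id) : ℕ) : ℝ)⁻¹ :=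
        sum_Ioc_inv_sq_le_sub (by omega) (le_max_left _ _)
    _ ≤ (A : ℝ)⁻¹ := by
        have : (0:ℝ) ≤ ((max A (u.sup _root_.id) : ℕ) : ℝ)⁻¹ := by positivity
        linarith

theorem V_A_two_lt_half (A : ℕ) (hA : 16 ≤ A) (t : ℝ) :
    ‖riemannZeta (2 + t * Complex.I) * ∑ n ∈ Finset.Icc 1 A,
      (ArithmeticFunction.moebius n : ℂ) / (n : ℂ) ^ ((2 : ℂ) + t * Complex.I) - 1‖ ^ 2
      < 1 / 2 := by
  set s : ℂ := 2 + t * Complex.I with hs_def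
  have hre : s.re = 2 := by
    simp [hs_def, Complex.add_re, Complex.mul_re]
  have hs : 1 < s.re := by rw [hre]; norm_num
  have hμ : LSeriesSummable (↗μ) s := ArithmeticFunction.LSeriesSummable_moebius_iff.mpr hs
  have hmul : riemannZeta s * LSeries (↗μ) s = 1 := by
    rw [← ArithmeticFunction.LSeries_zeta_eq_riemannZeta hs]
    exact ArithmeticFunction.LSeries_zeta_mul_Lseries_moebius hs
  -- partial sum equals sum of terms over range (A+1)
  have hrange : Finset.range (A + 1) = insert 0 (Finset.Icc 1 A) := by
    ext n
    simp only [Finset.mem_range, Finset.mem_insert, Finset.mem_Icc]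
    omega
  have hpartial : ∑ n ∈ Finset.Icc 1 A, (ArithmeticFunction.moebius n : ℂ) / (n : ℂ) ^ s
      = ∑ n ∈ Finset.range (A + 1), LSeries.term (↗μ) s n := by
    rw [hrange, Finset.sum_insert (by simp)]
    rw [LSeries.term_zero, zero_add]
    refine Finset.sum_congr rfl fun n hn => ?_
    rw [Finset.mem_Icc] at hn
    rw [LSeries.term_of_ne_zero (by omega)]
  have hsplit := Summable.sum_add_tsum_compl (s := Finset.range (A + 1)) hμ
  set T : ℂ := ∑' n : ↥(((Finset.range (A + 1) : Finset ℕ) : Set ℕ)ᶜ), LSeries.term (↗μ) s (n : ℕ)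
    with hT_def
  have hLS : LSeries (↗μ) s = ∑ n ∈ Finset.range (A + 1), LSeries.term (↗μ) s n + T := by
    exact hsplit.symm
  have key : riemannZeta s * (∑ n ∈ Finset.Icc 1 A,
      (ArithmeticFunction.moebius n : ℂ) / (n : ℂ) ^ s) - 1 = -(riemannZeta s * T) := by
    rw [hpartial]
    have : (∑ n ∈ Finset.range (A + 1), LSeries.term (↗μ) s n) = LSeries (↗μ) s - T := by
      rw [hLS]; ring
    rw [this, mul_sub, hmul]
    ring
  -- bound on |ζ s|
  have hzeta : ‖riemannZeta s‖ ≤ 2 := by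
    rw [← LSeries_one_eq_riemannZeta hs]
    have hsum1 : LSeriesSummable 1 s := LSeriesSummable_one_iff.mpr hs
    have hb : ∀ n : ℕ, ‖LSeries.term 1 s n‖ ≤ (1 : ℝ) / (n : ℝ) ^ 2 := by
      intro n
      rw [LSeries.norm_term_eq, hre]
      rcases eq_or_ne n 0 with rfl | hn
      · simp
      · simp [hn]
    have hsq : Summable (fun n : ℕ => (1 : ℝ) / (n : ℝ) ^ 2) := hasSum_zeta_two.summable
    have hnorm : Summable (fun n : ℕ => ‖LSeries.term 1 s n‖) :=
      Summable.of_nonneg_of_le (fun n => norm_nonneg _) hb hsq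
    calc ‖LSeries 1 s‖ = ‖∑' n, LSeries.term 1 s n‖ := rfl
      _ ≤ ∑' n, ‖LSeries.term 1 s n‖ := norm_tsum_le_tsum_norm hnorm
      _ ≤ ∑' n : ℕ, (1 : ℝ) / (n : ℝ) ^ 2 := Summable.tsum_le_tsum hb hnorm hsq
      _ = Real.pi ^ 2 / 6 := hasSum_zeta_two.tsum_eq
      _ ≤ 2 := by nlinarith [Real.pi_lt_d2, Real.pi_pos]
  -- bound on |T|
  have hTbound : ‖T‖ ≤ (A : ℝ)⁻¹ := by
    have hset : (((Finset.range (A + 1) : Finset ℕ) : Set ℕ)ᶜ) = {n : ℕ | A < n} := by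
      ext n
      simp [Nat.lt_succ_iff]
    have hb : ∀ n : ℕ, ‖LSeries.term (↗μ) s n‖ ≤ ((n : ℝ) ^ 2)⁻¹ := by
      intro n
      rw [LSeries.norm_term_eq, hre]
      rcases eq_or_ne n 0 with rfl | hn
      · simp
      · simp only [hn, if_false, ← one_div]
        have hm : ‖((μ n : ℂ))‖ ≤ 1 := by
          rw [Complex.norm_intCast]
          exact_mod_cast ArithmeticFunction.abs_moebius_le_one
        have h2 : ((n : ℝ) ^ (2 : ℝ)) = (n : ℝ) ^ (2 : ℕ) := by
          rw [show (2:ℝ) = ((2:ℕ):ℝ) by norm_num, Real.rpow_natCast]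
        rw [h2]
        gcongr
    have hsq : Summable (fun n : ℕ => ((n : ℝ) ^ 2)⁻¹) :=
      Real.summable_nat_pow_inv.mpr one_lt_two
    have hnorm : Summable (fun n : ℕ => ‖LSeries.term (↗μ) s n‖) :=
      Summable.of_nonneg_of_le (fun n => norm_nonneg _) hb hsq
    calc ‖T‖ = ‖T‖ := rfl
      _ ≤ ∑' n : ↥(((Finset.range (A + 1) : Finset ℕ) : Set ℕ)ᶜ), ‖LSeries.term (↗μ) s (n : ℕ)‖ :=
          norm_tsum_le_tsum_norm (hnorm.subtype _)
      _ ≤ ∑' n : ↥(((Finset.range (A + 1) : Finset ℕ) : Set ℕ)ᶜ), (((n : ℕ) : ℝ) ^ 2)⁻¹ :=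
          Summable.tsum_le_tsum (fun n => hb n) (hnorm.subtype _) (hsq.subtype _)
      _ = ∑' n : ℕ, Set.indicator {n : ℕ | A < n} (fun n : ℕ => ((n : ℝ) ^ 2)⁻¹) n := by
          rw [← hset, _root_.tsum_subtype (((Finset.range (A + 1) : Finset ℕ) : Set ℕ)ᶜ)
            (fun n : ℕ => ((n : ℝ) ^ 2)⁻¹)]
      _ ≤ (A : ℝ)⁻¹ := tail_sq_bound A (by omega)
  -- conclude
  rw [key, norm_neg, norm_mul]
  have hA' : (A : ℝ)⁻¹ ≤ (16 : ℝ)⁻¹ := by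
    apply inv_anti₀ (by norm_num)
    exact_mod_cast hA
  have h1 : ‖riemannZeta s‖ * ‖T‖ ≤ 2 * (16 : ℝ)⁻¹ := by
    apply mul_le_mul hzeta (hTbound.trans hA') (norm_nonneg _) (by norm_num)
  nlinarith [norm_nonneg (riemannZeta s), norm_nonneg T,
    mul_nonneg (norm_nonneg (riemannZeta s)) (norm_nonneg T)]
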